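/- There exists ε ∈ (0,1) such that (T u0)(s) ≥ u0(s) + ε·(v0(s) − u0(s)) for all s ∈ [0,1], where u0(s) = (deriv c 0)·s and v0(s) = c(s). -/

import Mathlib

open Set Filter Topology

/-- Supporting line at 0: `c x ≥ (deriv c 0) * x` on `[0,1]`. -/
theorem aux_lower (c : ℝ → ℝ) (hc_conv : ConvexOn ℝ (Set.Icc 0 1) c)
    (hc0 : c 0 = 0) (hc'0 : 0 < deriv c 0) :
    ∀ x ∈ Set.Icc (0:ℝ) 1, deriv c 0 * x ≤ c x := by
  intro x hx
  rcases eq_or_lt_of_le hx.1 with h0 | hx0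
  · simp [← h0, hc0]
  have hdiff : DifferentiableAt ℝ c 0 := differentiableAt_of_deriv_ne_zero (ne_of_gt hc'0)
  have hder : HasDerivWithinAt c (deriv c 0) (Set.Ioi 0) 0 :=
    hdiff.hasDerivAt.hasDerivWithinAt
  have hslope : Tendsto (slope c 0) (𝓝[Set.Ioi 0] 0) (𝓝 (deriv c 0)) :=
    (hasDerivWithinAt_iff_tendsto_slope' (by simp)).mp hder
  have hb : ∀ᶠ y in 𝓝[Set.Ioi (0:ℝ)] 0, slope c 0 y ≤ (c x - c 0) / (x - 0) := by
    filter_upwards [self_mem_nhdsWithin,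
      nhdsWithin_le_nhds (Iio_mem_nhds hx0)] with y hy0 hyx
    have hy0' : (0:ℝ) < y := hy0
    have hyx' : y < x := hyx
    have := hc_conv.secant_mono (a := 0) (x := y) (y := x)
      (by constructor <;> norm_num) ⟨hy0'.le, hyx'.le.trans hx.2⟩ ⟨hx.1, hx.2⟩
      (ne_of_gt hy0') (ne_of_gt hx0) hyx'.le
    simpa [slope_def_field] using this
  have hle : deriv c 0 ≤ (c x - c 0) / (x - 0) := le_of_tendsto hslope hb
  rw [hc0, sub_zero, sub_zero] at hle
  exact (le_div_iff₀ hx0).mp hle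

/-- A global Lipschitz-type upper bound on slopes of `c` on `[0,1]`. -/
theorem aux_lip (c : ℝ → ℝ) (hc_diff : DifferentiableOn ℝ c (Set.Icc 0 1))
    (hc_conv : ConvexOn ℝ (Set.Icc 0 1) c) :
    ∃ L : ℝ, ∀ x s : ℝ, 0 ≤ x → x ≤ s → s ≤ 1 → c s - c x ≤ L * (s - x) := by
  refine ⟨derivWithin c (Set.Icc 0 1) 1, ?_⟩
  set L := derivWithin c (Set.Icc 0 1) 1 with hLdef
  intro x s hx0 hxs hs1
  rcases eq_or_lt_of_le hxs with h | hxs'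
  · simp [← h]
  have hx1 : x < 1 := lt_of_lt_of_le hxs' hs1
  have hmem1 : (1:ℝ) ∈ Set.Icc (0:ℝ) 1 := by norm_num
  have hder : HasDerivWithinAt c L (Set.Icc 0 1) 1 := (hc_diff 1 hmem1).hasDerivWithinAt
  have hslope : Tendsto (slope c 1) (𝓝[Set.Icc (0:ℝ) 1 \ {1}] 1) (𝓝 L) :=
    hasDerivWithinAt_iff_tendsto_slope.mp hder
  have hseteq : Set.Icc (0:ℝ) 1 \ {1} = Set.Ico (0:ℝ) 1 := Set.Icc_sdiff_right
  rw [hseteq] at hslope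
  haveI : (𝓝[Set.Ico (0:ℝ) 1] 1).NeBot := by
    rw [nhdsWithin_Ico_eq_nhdsLT (by norm_num : (0:ℝ) < 1)]
    infer_instance
  have hb : ∀ᶠ y in 𝓝[Set.Ico (0:ℝ) 1] 1, (c s - c x) / (s - x) ≤ slope c 1 y := by
    filter_upwards [self_mem_nhdsWithin,
      nhdsWithin_le_nhds (Ioi_mem_nhds hx1)] with y hy hxy
    have hy1 : y < 1 := hy.2
    have hxy' : x < y := hxy
    have hxmem : x ∈ Set.Icc (0:ℝ) 1 := ⟨hx0, hx1.le⟩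
    have hsmem : s ∈ Set.Icc (0:ℝ) 1 := ⟨hx0.trans hxs, hs1⟩
    have hymem : y ∈ Set.Icc (0:ℝ) 1 := ⟨hy.1, hy1.le⟩
    have step1 : (c s - c x) / (s - x) ≤ (c 1 - c x) / (1 - x) :=
      hc_conv.secant_mono (a := x) hxmem hsmem hmem1
        (ne_of_gt hxs') (ne_of_gt hx1) hs1
    have step2 : (c x - c 1) / (x - 1) ≤ (c y - c 1) / (y - 1) :=
      hc_conv.secant_mono (a := 1) hmem1 hxmem hymem
        (ne_of_lt hx1) (ne_of_lt hy1) hxy'.le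
    have e : (c x - c 1) / (x - 1) = (c 1 - c x) / (1 - x) := by
      rw [← neg_sub (c 1) (c x), ← neg_sub (1:ℝ) x, neg_div_neg_eq]
    rw [e] at step2
    have : slope c 1 y = (c y - c 1) / (y - 1) := by simp [slope_def_field]
    rw [this]
    exact step1.trans step2
  have hle : (c s - c x) / (s - x) ≤ L := ge_of_tendsto hslope hb
  have hsx : (0:ℝ) < s - x := by linarith
  calc c s - c x = (c s - c x) / (s - x) * (s - x) := by field_simp
    _ ≤ L * (s - x) := by
        apply mul_le_mul_of_nonneg_right hle hsx.le

noncomputable def Tmap (c : ℝ → ℝ) (g : ℕ → ℝ) (δ : ℝ) (p : ℝ → ℝ) (s : ℝ) : ℝ :=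
  sInf {y : ℝ | ∃ k : ℕ, ∃ t : ℝ, 1 ≤ k ∧ 0 ≤ t ∧ t ≤ s ∧
    y = c (s - t) + g k + δ * k * p (t / k)}

theorem Tmap_u0_ge (c : ℝ → ℝ) (g : ℕ → ℝ) (δ : ℝ)
(hc_diff : DifferentiableOn ℝ c (Set.Icc 0 1))
    (hc_mono : StrictMonoOn c (Set.Icc 0 1))
    (hc_conv : StrictConvexOn ℝ (Set.Icc 0 1) c)
    (hc0 : c 0 = 0) (hc'0 : 0 < deriv c 0)
    (hg_mono : StrictMonoOn g {k : ℕ | 1 ≤ k})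
    (hg1 : g 1 = 0) (hg_nonneg : ∀ k : ℕ, 1 ≤ k → 0 ≤ g k)
    (hg_top : Tendsto g atTop atTop)
    (hδ : 1 < δ) :
    ∃ ε : ℝ, 0 < ε ∧ ε < 1 ∧
      ∀ s ∈ Set.Icc (0 : ℝ) 1,
        deriv c 0 * s + ε * (c s - deriv c 0 * s) ≤
          Tmap c g δ (fun x => deriv c 0 * x) s := by
  obtain ⟨L, hL⟩ := aux_lip c hc_diff hc_conv.convexOn
  have hlow := aux_lower c hc_conv.convexOn hc0 hc'0
  set a := deriv c 0 with ha
  set K := (δ - 1) * a with hKdef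
  have hK : 0 < K := mul_pos (by linarith) hc'0
  set L' := max K L with hL'def
  have hKL' : K ≤ L' := le_max_left _ _
  have hLL' : L ≤ L' := le_max_right _ _
  have hL'pos : 0 < L' := lt_of_lt_of_le hK hKL'
  set ε := K / (2 * L') with hεdef
  have hεpos : 0 < ε := by positivity
  have hε2 : ε * (2 * L') = K := by
    rw [hεdef]; field_simp
  have hεhalf : ε ≤ 1 / 2 := by
    rw [hεdef, div_le_div_iff₀ (by positivity) (by norm_num)]
    linarith
  refine ⟨ε, hεpos, by linarith, ?_⟩
  intro s hs
  simp only [Tmap]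
  apply le_csInf
  · exact ⟨_, 1, 0, le_rfl, le_rfl, hs.1, rfl⟩
  rintro y ⟨k, t, hk, ht0, hts, rfl⟩
  have hk0 : (k:ℝ) ≠ 0 := Nat.cast_ne_zero.mpr (by omega)
  have e : δ * (k:ℝ) * (a * (t / k)) = δ * a * t := by field_simp
  beta_reduce
  rw [e]
  have hgk : 0 ≤ g k := hg_nonneg k hk
  have hxmem : s - t ∈ Set.Icc (0:ℝ) 1 := ⟨by linarith, by linarith [hs.2]⟩
  have hD0 : a * (s - t) ≤ c (s - t) := hlow _ hxmem
  have hH0 : a * s ≤ c s := hlow s hs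
  have hlip : c s - c (s - t) ≤ L * t := by
    have := hL (s - t) s (by linarith) (by linarith) hs.2
    rwa [show s - (s - t) = t by ring] at this
  have hLt : L * t ≤ L' * t := mul_le_mul_of_nonneg_right hLL' ht0
  have hδat : δ * a * t = a * t + K * t := by rw [hKdef]; ring
  have haxt : a * (s - t) = a * s - a * t := by ring
  have hat : 0 ≤ a * t := mul_nonneg hc'0.le ht0
  -- goal: a * s + ε * (c s - a * s) ≤ c (s - t) + g k + δ * a * t
  by_cases hcase : ε * (c s - a * s) ≤ K * t
  · linarith
  · push_neg at hcase
    have h2 : 2 * L' * t < c s - a * s := by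
      have h1 : ε * (2 * L' * t) < ε * (c s - a * s) := by
        calc ε * (2 * L' * t) = ε * (2 * L') * t := by ring
          _ = K * t := by rw [hε2]
          _ < ε * (c s - a * s) := hcase
      exact lt_of_mul_lt_mul_left h1 hεpos.le
    have h3 : ε * (c s - a * s) ≤ (1/2) * (c s - a * s) :=
      mul_le_mul_of_nonneg_right hεhalf (by linarith)
    have hKt : 0 ≤ K * t := mul_nonneg hK.le ht0
    linarith
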